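/- arXiv:1702.05913 — 4 statements merged into one kernel-verified Lean document; each statement's English description precedes it below -/
import Mathlib

section
/- With P and S̃ as in the cascade recurrence, for each fixed k ≥ 1 the sequence n ↦ S̃(n,k) is monotone increasing in n and bounded above, hence convergent. -/
open Filter Finset

/-- For each fixed `k ≥ 1`, `n ↦ S̃(n,k)` is monotone increasing and bounded above,
hence convergent. -/
theorem cascade_Stilde_monotone_bounded_convergent
    (β : ℝ) (hβ0 : 0 < β) (hβ1 : β < 1)
    (P : ℕ → ℕ → ℝ)
    (hP1 : P 1 1 = 1)
    (hP0 : ∀ n k : ℕ, (n < k ∨ k = 0) → P n k = 0)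
    (hPrec : ∀ n k : ℕ, 2 ≤ n → 1 ≤ k → k ≤ n →
      P n k = β ^ k * P (n - 1) k + (1 - β ^ (k - 1)) * P (n - 1) (k - 1)) :
    ∀ k : ℕ, 1 ≤ k →
      Monotone (fun n : ℕ => ∑ i ∈ Finset.Icc 1 n, P i k)
      ∧ BddAbove (Set.range (fun n : ℕ => ∑ i ∈ Finset.Icc 1 n, P i k))
      ∧ ∃ L : ℝ, Tendsto (fun n : ℕ => ∑ i ∈ Finset.Icc 1 n, P i k) atTop (nhds L) := by
  have hpow1 : ∀ m : ℕ, β ^ m ≤ 1 := fun m => pow_le_one₀ hβ0.le hβ1.le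
  have hpowlt : ∀ m : ℕ, 1 ≤ m → β ^ m < 1 := fun m hm =>
    pow_lt_one₀ hβ0.le hβ1 (by omega)
  -- extended recurrence (also valid when k > n, both sides vanish)
  have hrec' : ∀ n k : ℕ, 2 ≤ n → 1 ≤ k →
      P n k = β ^ k * P (n - 1) k + (1 - β ^ (k - 1)) * P (n - 1) (k - 1) := by
    intro n k hn hk
    rcases le_or_gt k n with h | h
    · exact hPrec n k hn hk h
    · rw [hP0 n k (Or.inl h), hP0 (n-1) k (Or.inl (by omega)),
        hP0 (n-1) (k-1) (Or.inl (by omega))]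
      ring
  -- nonnegativity
  have hPnn : ∀ n k : ℕ, 0 ≤ P n k := by
    intro n
    induction n using Nat.strong_induction_on with
    | _ n ih =>
      intro k
      rcases Nat.eq_zero_or_pos k with rfl | hk
      · rw [hP0 n 0 (Or.inr rfl)]
      rcases Nat.lt_or_ge n 2 with hn | hn
      · interval_cases n
        · rw [hP0 0 k (Or.inl hk)]
        · rcases eq_or_lt_of_le (show 1 ≤ k from hk) with h | h
          · rw [← h, hP1]; norm_num
          · rw [hP0 1 k (Or.inl h)]
      · rw [hrec' n k hn hk]
        exact add_nonneg
          (mul_nonneg (by positivity) (ih (n-1) (by omega) k))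
          (mul_nonneg (by linarith [hpow1 (k-1)]) (ih (n-1) (by omega) (k-1)))
  -- sum identity
  have hS : ∀ k : ℕ, 1 ≤ k → ∀ n : ℕ,
      ∑ i ∈ Icc 1 (n+1), P i k
        = P 1 k + β ^ k * ∑ i ∈ Icc 1 n, P i k
          + (1 - β ^ (k-1)) * ∑ i ∈ Icc 1 n, P i (k-1) := by
    intro k hk n
    induction n with
    | zero => simp
    | succ m ihm =>
      have e : (m+2) - 1 = m + 1 := rfl
      rw [Finset.sum_Icc_succ_top (by omega : 1 ≤ m+1),
        Finset.sum_Icc_succ_top (by omega : 1 ≤ m+1),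
        Finset.sum_Icc_succ_top (by omega : 1 ≤ m+1+1), ihm,
        hrec' (m+2) k (by omega) hk, e]
      ring
  -- monotonicity
  have hmono : ∀ k : ℕ, Monotone (fun n : ℕ => ∑ i ∈ Icc 1 n, P i k) := by
    intro k
    apply monotone_nat_of_le_succ
    intro n
    show ∑ i ∈ Icc 1 n, P i k ≤ ∑ i ∈ Icc 1 (n+1), P i k
    rw [Finset.sum_Icc_succ_top (by omega : 1 ≤ n+1)]
    linarith [hPnn (n+1) k]
  -- bounds, by induction on k
  have hbdd : ∀ k : ℕ, ∃ B : ℝ, ∀ n, ∑ i ∈ Icc 1 n, P i k ≤ B := by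
    intro k
    induction k with
    | zero =>
      refine ⟨0, fun n => le_of_eq ?_⟩
      exact Finset.sum_eq_zero (fun i _ => hP0 i 0 (Or.inr rfl))
    | succ k ihk =>
      obtain ⟨B, hB⟩ := ihk
      have hB0 : 0 ≤ B := le_trans (by simp) (hB 0)
      have hc0 : 0 < 1 - β ^ (k+1) := by linarith [hpowlt (k+1) (by omega)]
      have hbk1 : (0:ℝ) ≤ 1 - β ^ k := by linarith [hpow1 k]
      refine ⟨(P 1 (k+1) + (1 - β ^ k) * B) / (1 - β ^ (k+1)), ?_⟩
      intro n
      rcases n with _ | m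
      · simp only [Finset.Icc_eq_empty_of_lt (by omega : (1:ℕ) > 0), Finset.sum_empty]
        exact div_nonneg (add_nonneg (hPnn 1 (k+1)) (mul_nonneg hbk1 hB0)) hc0.le
      · have h := hS (k+1) (by omega) m
        simp only [Nat.add_sub_cancel] at h
        have hm : ∑ i ∈ Icc 1 m, P i (k+1) ≤ ∑ i ∈ Icc 1 (m+1), P i (k+1) :=
          hmono (k+1) (Nat.le_succ m)
        have hk' := hB m
        rw [le_div_iff₀ hc0]
        have hbpos : (0:ℝ) ≤ β ^ (k+1) := by positivity
        nlinarith [mul_le_mul_of_nonneg_left hm hbpos,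
          mul_le_mul_of_nonneg_left hk' hbk1]
  intro k hk
  obtain ⟨B, hB⟩ := hbdd k
  have hb : BddAbove (Set.range fun n : ℕ => ∑ i ∈ Icc 1 n, P i k) :=
    ⟨B, by rintro x ⟨n, rfl⟩; exact hB n⟩
  exact ⟨hmono k, hb, ⟨_, tendsto_atTop_ciSup (hmono k) hb⟩⟩
end

section
/- With P and S̃ as in the cascade recurrence, for every k ≥ 1 we have lim_{n→∞} S̃(n,k) = 1/(1-β^k). -/
open Filter Finset

/-- Theorem 1 of the paper: for every `k ≥ 1`,
`lim_{n→∞} S̃(n,k) = 1/(1-β^k)`, i.e. `S(n,k) ~ 1/(n(1-β^k))`. -/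
theorem cascade_Stilde_tendsto
    (β : ℝ) (hβ0 : 0 < β) (hβ1 : β < 1)
    (P : ℕ → ℕ → ℝ)
    (hP1 : P 1 1 = 1)
    (hP0 : ∀ n k : ℕ, (n < k ∨ k = 0) → P n k = 0)
    (hPrec : ∀ n k : ℕ, 2 ≤ n → 1 ≤ k → k ≤ n →
      P n k = β ^ k * P (n - 1) k + (1 - β ^ (k - 1)) * P (n - 1) (k - 1)) :
    ∀ k : ℕ, 1 ≤ k →
      Tendsto (fun n : ℕ => ∑ i ∈ Finset.Icc 1 n, P i k) atTop
        (nhds (1 / (1 - β ^ k))) := by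
  -- basic facts about β
  have hβle : ∀ m : ℕ, β ^ m ≤ 1 := fun m => pow_le_one₀ hβ0.le hβ1.le
  have hβlt : ∀ m : ℕ, 1 ≤ m → β ^ m < 1 := fun m hm =>
    pow_lt_one₀ hβ0.le hβ1 (by omega)
  have hpos : ∀ m : ℕ, 1 ≤ m → 0 < 1 - β ^ m := fun m hm => by
    have := hβlt m hm; linarith
  -- nonnegativity of P
  have hPnn : ∀ n k : ℕ, 0 ≤ P n k := by
    intro n
    induction n using Nat.strong_induction_on with
    | _ n ih =>
      intro k
      rcases Nat.eq_zero_or_pos k with hk | hk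
      · rw [hP0 n k (Or.inr hk)]
      rcases lt_or_ge n k with h | h
      · rw [hP0 n k (Or.inl h)]
      rcases lt_or_ge n 2 with hn | hn
      · have hn1 : n = 1 := by omega
        have hk1 : k = 1 := by omega
        subst hn1; subst hk1
        rw [hP1]; norm_num
      · rw [hPrec n k hn hk h]
        have h1 : 0 ≤ P (n - 1) k := ih (n - 1) (by omega) k
        have h2 : 0 ≤ P (n - 1) (k - 1) := ih (n - 1) (by omega) (k - 1)
        have h3 : (0:ℝ) ≤ β ^ k := pow_nonneg hβ0.le k
        have h4 : (0:ℝ) ≤ 1 - β ^ (k - 1) := by have := hβle (k - 1); linarith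
        nlinarith
  set S : ℕ → ℕ → ℝ := fun n k => ∑ i ∈ Finset.Icc 1 n, P i k with hSdef
  have hS0 : ∀ k, S 0 k = 0 := by
    intro k
    show (∑ i ∈ Finset.Icc 1 0, P i k) = 0
    rw [Finset.Icc_eq_empty (by omega), Finset.sum_empty]
  have hSstep : ∀ n k, S (n + 1) k = S n k + P (n + 1) k := by
    intro n k
    show (∑ i ∈ Finset.Icc 1 (n + 1), P i k) = _
    rw [Finset.sum_Icc_succ_top (by omega)]
  have hSzero : ∀ n, S n 0 = 0 := by
    intro n
    show (∑ i ∈ Finset.Icc 1 n, P i 0) = 0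
    apply Finset.sum_eq_zero
    intro i _
    exact hP0 i 0 (Or.inr rfl)
  -- pointwise recurrence valid for all n ≥ 2 even when k > n
  have hP' : ∀ n k : ℕ, 1 ≤ k →
      P (n + 2) k = β ^ k * P (n + 1) k + (1 - β ^ (k - 1)) * P (n + 1) (k - 1) := by
    intro n k hk
    rcases le_or_gt k (n + 2) with hkn | hkn
    · have := hPrec (n + 2) k (by omega) hk hkn
      simpa using this
    · rw [hP0 (n + 2) k (Or.inl (by omega)), hP0 (n + 1) k (Or.inl (by omega)),
        hP0 (n + 1) (k - 1) (Or.inl (by omega))]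
      ring
  -- recurrence for partial sums
  have hrec : ∀ k : ℕ, 1 ≤ k → ∀ n : ℕ,
      S (n + 1) k = (if k = 1 then (1:ℝ) else 0) + β ^ k * S n k
        + (1 - β ^ (k - 1)) * S n (k - 1) := by
    intro k hk n
    induction n with
    | zero =>
      rw [hSstep, hS0, hS0]
      rcases eq_or_lt_of_le hk with h | h
      · simp only [← h, if_pos rfl, if_true, eq_self_iff_true]
        rw [hP1]; ring
      · rw [if_neg (by omega), hP0 1 k (Or.inl h)]; ring
    | succ n ihn =>
      have e1 := hSstep (n + 1) k
      have e2 := hP' n k hk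
      have e3 := hSstep n k
      have e4 := hSstep n (k - 1)
      linear_combination e1 + e2 + ihn - β ^ k * e3 - (1 - β ^ (k - 1)) * e4
  -- monotonicity
  have hmono : ∀ k, Monotone fun n => S n k := by
    intro k
    apply monotone_nat_of_le_succ
    intro n
    rw [hSstep]
    have := hPnn (n + 1) k
    linarith
  -- boundedness
  have hbdd : ∀ k : ℕ, 1 ≤ k → ∀ n, S n k ≤ 1 / (1 - β ^ k) := by
    intro k hk
    induction k with
    | zero => omega
    | succ j ihj =>
      rcases Nat.eq_zero_or_pos j with hj | hj
      · -- k = 1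
        subst hj
        intro n
        have h1 : (0:ℝ) < 1 - β := by linarith
        induction n with
        | zero =>
          rw [hS0]
          exact le_of_lt (div_pos one_pos (hpos _ le_rfl))
        | succ n ihn =>
          have h := hrec 1 le_rfl n
          simp only [pow_one, Nat.sub_self, pow_zero, sub_self, zero_mul,
            add_zero, if_pos rfl, if_true, eq_self_iff_true] at h
          simp only [zero_add, pow_one] at ihn ⊢
          rw [h]
          have hb : β * S n 1 ≤ β * (1 / (1 - β)) :=
            mul_le_mul_of_nonneg_left ihn hβ0.le
          have he : 1 + β * (1 / (1 - β)) = 1 / (1 - β) := by field_simp; ring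
          linarith
      · -- k = j + 1, j ≥ 1
        have ihj' := ihj hj
        intro n
        have hkk : (0:ℝ) < 1 - β ^ (j + 1) := hpos (j + 1) (by omega)
        have hjj : (0:ℝ) < 1 - β ^ j := hpos j hj
        induction n with
        | zero =>
          rw [hS0]
          exact le_of_lt (div_pos one_pos hkk)
        | succ n ihn =>
          have h := hrec (j + 1) (by omega) n
          rw [if_neg (by omega)] at h
          have hsub : j + 1 - 1 = j := by omega
          rw [hsub] at h
          rw [h]
          have hb1 : β ^ (j + 1) * S n (j + 1) ≤ β ^ (j + 1) * (1 / (1 - β ^ (j + 1))) :=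
            mul_le_mul_of_nonneg_left ihn (pow_nonneg hβ0.le _)
          have hb2 : (1 - β ^ j) * S n j ≤ (1 - β ^ j) * (1 / (1 - β ^ j)) :=
            mul_le_mul_of_nonneg_left (ihj' n) (by linarith)
          have he1 : (1 - β ^ j) * (1 / (1 - β ^ j)) = 1 := by
            field_simp
          have he2 : β ^ (j + 1) * (1 / (1 - β ^ (j + 1))) + 1 = 1 / (1 - β ^ (j + 1)) := by
            field_simp; ring
          linarith
  -- limits
  set L : ℕ → ℝ := fun k => ⨆ n, S n k with hLdef
  have hconv : ∀ k : ℕ, Tendsto (fun n => S n k) atTop (nhds (L k)) := by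
    intro k
    rcases Nat.eq_zero_or_pos k with hk | hk
    · subst hk
      have h1 : (fun n => S n 0) = fun _ => (0:ℝ) := funext hSzero
      have h2 : L 0 = 0 := by
        show (⨆ n, S n 0) = 0
        simp only [hSzero]
        exact ciSup_const
      rw [h1, h2]
      exact tendsto_const_nhds
    · exact tendsto_atTop_ciSup (hmono k)
        ⟨1 / (1 - β ^ k), by rintro x ⟨n, rfl⟩; exact hbdd k hk n⟩
  have hLeq : ∀ k : ℕ, 1 ≤ k →
      L k = (if k = 1 then (1:ℝ) else 0) + β ^ k * L k + (1 - β ^ (k - 1)) * L (k - 1) := by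
    intro k hk
    have h1 : Tendsto (fun n => S (n + 1) k) atTop (nhds (L k)) :=
      (hconv k).comp (tendsto_add_atTop_nat 1)
    have h2 : Tendsto
        (fun n => (if k = 1 then (1:ℝ) else 0) + β ^ k * S n k
          + (1 - β ^ (k - 1)) * S n (k - 1)) atTop
        (nhds ((if k = 1 then (1:ℝ) else 0) + β ^ k * L k + (1 - β ^ (k - 1)) * L (k - 1))) := by
      exact (((hconv k).const_mul _).const_add _).add ((hconv (k - 1)).const_mul _)
    have h3 : (fun n => S (n + 1) k)
        = fun n => (if k = 1 then (1:ℝ) else 0) + β ^ k * S n k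
          + (1 - β ^ (k - 1)) * S n (k - 1) := funext (hrec k hk)
    rw [h3] at h1
    exact tendsto_nhds_unique h1 h2
  have hLval : ∀ k : ℕ, 1 ≤ k → L k = 1 / (1 - β ^ k) := by
    intro k hk
    induction k with
    | zero => omega
    | succ j ihj =>
      rcases Nat.eq_zero_or_pos j with hj | hj
      · subst hj
        have h := hLeq 1 le_rfl
        simp only [pow_one, Nat.sub_self, pow_zero, sub_self, zero_mul,
          add_zero, if_pos rfl, if_true, eq_self_iff_true] at h
        have h1 : (0:ℝ) < 1 - β := by linarith
        simp only [zero_add, pow_one]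
        rw [eq_div_iff (by linarith)]
        linear_combination h
      · have h := hLeq (j + 1) (by omega)
        rw [if_neg (by omega)] at h
        have hsub : j + 1 - 1 = j := by omega
        rw [hsub, ihj hj] at h
        have hjj : (0:ℝ) < 1 - β ^ j := hpos j hj
        have hkk : (0:ℝ) < 1 - β ^ (j + 1) := hpos (j + 1) (by omega)
        have he : (1 - β ^ j) * (1 / (1 - β ^ j)) = 1 := by field_simp
        rw [he] at h
        rw [eq_div_iff (by linarith)]
        linear_combination h
  intro k hk
  have := hconv k
  rwa [hLval k hk] at this
end

section
/- In the dependent-passing cascade model, for every k ≥ 1, lim_{n→∞} ∑_{i=1}^n Q(i,k) = 1/(1-β^k). In particular the limiting cascade size distribution is the same as in the independent-passing (CGM) model. -/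
open Filter Finset

/-- Dependent-passing model: for every `k ≥ 1`,
`lim_{n→∞} ∑_{i=1}^n Q(i,k) = 1/(1-β^k)` — the same limiting cascade size
distribution as in the independent-passing (CGM) model. -/
theorem dependent_cascade_tendsto
    (α β : ℝ) (hα0 : 0 < α) (hα1 : α < 1) (hβ0 : 0 < β) (hβ1 : β < 1)
    (Q : ℕ → ℕ → ℝ)
    (hQ1 : Q 1 1 = α)
    (hQ0 : ∀ n k : ℕ, (n < k ∨ k = 0) → Q n k = 0)
    (hQrec : ∀ n k : ℕ, 2 ≤ n → 1 ≤ k → k ≤ n →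
      Q n k = (1 - (1 - β ^ k) * α) * Q (n - 1) k
        + α * (1 - β ^ (k - 1)) * Q (n - 1) (k - 1)) :
    ∀ k : ℕ, 1 ≤ k →
      Tendsto (fun n : ℕ => ∑ i ∈ Finset.Icc 1 n, Q i k) atTop
        (nhds (1 / (1 - β ^ k))) := by
  set S : ℕ → ℕ → ℝ := fun k N => ∑ i ∈ Finset.Icc 1 N, Q i k with hS
  have hβk0 : ∀ k : ℕ, 0 < β ^ k := fun k => pow_pos hβ0 k
  have hβkle : ∀ k : ℕ, β ^ k ≤ 1 := fun k => pow_le_one₀ hβ0.le hβ1.le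
  have hβk1 : ∀ k : ℕ, 1 ≤ k → β ^ k < 1 := fun k hk =>
    pow_lt_one₀ hβ0.le hβ1 (by omega)
  have hrec' : ∀ n k : ℕ, 2 ≤ n → 1 ≤ k →
      Q n k = (1 - (1 - β ^ k) * α) * Q (n - 1) k
        + α * (1 - β ^ (k - 1)) * Q (n - 1) (k - 1) := by
    intro n k hn hk
    by_cases h : k ≤ n
    · exact hQrec n k hn hk h
    · push_neg at h
      rw [hQ0 n k (Or.inl h), hQ0 (n - 1) k (Or.inl (by omega)),
        hQ0 (n - 1) (k - 1) (Or.inl (by omega))]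
      ring
  have hQpos : ∀ n k : ℕ, 0 ≤ Q n k := by
    intro n
    induction n with
    | zero =>
      intro k
      rcases Nat.eq_zero_or_pos k with h | h
      · rw [hQ0 0 k (Or.inr h)]
      · rw [hQ0 0 k (Or.inl h)]
    | succ n ih =>
      intro k
      rcases Nat.eq_zero_or_pos k with hk | hk
      · subst hk; rw [hQ0 (n + 1) 0 (Or.inr rfl)]
      rcases Nat.lt_or_ge n 1 with hn | hn
      · interval_cases n
        rcases eq_or_ne k 1 with h | h
        · rw [h, hQ1]; exact hα0.le
        · rw [hQ0 1 k (Or.inl (by omega))]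
      · have h2 : 2 ≤ n + 1 := by omega
        rw [hrec' (n + 1) k h2 hk]
        simp only [Nat.add_sub_cancel]
        have hc : 0 ≤ 1 - (1 - β ^ k) * α := by nlinarith [hβk0 k, hβkle k]
        have hd : 0 ≤ α * (1 - β ^ (k - 1)) := by nlinarith [hβkle (k - 1)]
        exact add_nonneg (mul_nonneg hc (ih k)) (mul_nonneg hd (ih (k - 1)))
  have hSmono : ∀ k, Monotone (fun N => S k N) := by
    intro k a b hab
    exact Finset.sum_le_sum_of_subset_of_nonneg
      (Finset.Icc_subset_Icc_right hab) (fun i _ _ => hQpos i k)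
  have hS0 : ∀ k, S k 0 = 0 := by
    intro k; simp [hS]
  have hS1 : ∀ k, S k 1 = Q 1 k := by
    intro k; simp [hS]
  have hSrec : ∀ k : ℕ, 1 ≤ k → ∀ N : ℕ,
      S k (N + 1) = (1 - (1 - β ^ k) * α) * S k N
        + (α * (1 - β ^ (k - 1)) * S (k - 1) N + Q 1 k) := by
    intro k hk N
    induction N with
    | zero => rw [hS1, hS0, hS0]; ring
    | succ N ih =>
      have h1 : S k (N + 1 + 1) = S k (N + 1) + Q (N + 2) k := by
        rw [hS]
        exact Finset.sum_Icc_succ_top (by omega) _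
      have h2 : S (k - 1) (N + 1) = S (k - 1) N + Q (N + 1) (k - 1) := by
        rw [hS]
        exact Finset.sum_Icc_succ_top (by omega) _
      have h3 : S k (N + 1) = S k N + Q (N + 1) k := by
        rw [hS]
        exact Finset.sum_Icc_succ_top (by omega) _
      have h4 : Q (N + 2) k = (1 - (1 - β ^ k) * α) * Q (N + 1) k
          + α * (1 - β ^ (k - 1)) * Q (N + 1) (k - 1) :=
        hrec' (N + 2) k (by omega) hk
      rw [h1]
      linear_combination h4 + ih - (1 - (1 - β ^ k) * α) * h3
        - (α * (1 - β ^ (k - 1))) * h2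
  -- key convergence lemma
  have key : ∀ k : ℕ, 1 ≤ k →
      Monotone (fun N => α * (1 - β ^ (k - 1)) * S (k - 1) N + Q 1 k) →
      Tendsto (fun N => α * (1 - β ^ (k - 1)) * S (k - 1) N + Q 1 k) atTop
        (nhds α) →
      Tendsto (fun n => S k n) atTop (nhds (1 / (1 - β ^ k))) := by
    intro k hk hgm hgt
    set g : ℕ → ℝ := fun N => α * (1 - β ^ (k - 1)) * S (k - 1) N + Q 1 k
      with hg
    have hc0 : 0 < 1 - (1 - β ^ k) * α := by nlinarith [hβk0 k, hβkle k]
    have hck : 0 < (1 - β ^ k) * α := by nlinarith [hβk1 k hk]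
    have hbk : 0 < 1 - β ^ k := by nlinarith [hβk1 k hk]
    have hglea : ∀ N, g N ≤ α := fun N => hgm.ge_of_tendsto hgt N
    have hB : ∀ N, S k N ≤ 1 / (1 - β ^ k) := by
      intro N
      induction N with
      | zero => rw [hS0]; positivity
      | succ N ih =>
        rw [hSrec k hk N]
        have h5 : (1 - (1 - β ^ k) * α) * S k N
            ≤ (1 - (1 - β ^ k) * α) * (1 / (1 - β ^ k)) :=
          mul_le_mul_of_nonneg_left ih hc0.le
        have hx : (1 - (1 - β ^ k) * α) * (1 / (1 - β ^ k)) + α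
            = 1 / (1 - β ^ k) := by
          field_simp
          ring
        have hga : α * (1 - β ^ (k - 1)) * S (k - 1) N + Q 1 k ≤ α :=
          hglea N
        linarith
    have hbdd : BddAbove (Set.range (fun n => S k n)) := by
      refine ⟨1 / (1 - β ^ k), ?_⟩
      rintro _ ⟨n, rfl⟩
      exact hB n
    have hL := tendsto_atTop_ciSup (hSmono k) hbdd
    set L := ⨆ n, S k n with hLdef
    have h1 : Tendsto (fun N => S k (N + 1)) atTop (nhds L) :=
      hL.comp (tendsto_add_atTop_nat 1)
    have h2 : Tendsto (fun N => (1 - (1 - β ^ k) * α) * S k N + g N) atTop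
        (nhds ((1 - (1 - β ^ k) * α) * L + α)) :=
      (hL.const_mul _).add hgt
    have heq : (fun N => S k (N + 1))
        = fun N => (1 - (1 - β ^ k) * α) * S k N + g N :=
      funext fun N => hSrec k hk N
    rw [heq] at h1
    have hLa : L = (1 - (1 - β ^ k) * α) * L + α := tendsto_nhds_unique h1 h2
    have h3 : α * ((1 - β ^ k) * L) = α * 1 := by nlinarith [hLa]
    have h4 : (1 - β ^ k) * L = 1 := mul_left_cancel₀ (ne_of_gt hα0) h3
    have h4' : L * (1 - β ^ k) = 1 := by linear_combination h4
    have h5 : L = 1 / (1 - β ^ k) := eq_one_div_of_mul_eq_one_left h4'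
    rw [← h5]
    exact hL
  intro k hk
  induction k with
  | zero => omega
  | succ m ih =>
    apply key (m + 1) (by omega)
    · rcases Nat.eq_zero_or_pos m with hm | hm
      · subst hm
        intro a b hab
        simp
      · intro a b hab
        have h := hSmono ((m + 1) - 1) hab
        have hd : 0 ≤ α * (1 - β ^ ((m + 1) - 1)) := by
          have := hβkle ((m + 1) - 1); nlinarith
        simp only
        nlinarith
    · rcases Nat.eq_zero_or_pos m with hm | hm
      · subst hm
        have : (fun N => α * (1 - β ^ (1 - 1)) * S (1 - 1) N + Q 1 1)
            = fun _ => α := by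
          funext N
          simp [hQ1]
        rw [this]
        exact tendsto_const_nhds
      · have ihm := ih hm
        simp only [Nat.add_sub_cancel]
        have hq0 : Q 1 (m + 1) = 0 := hQ0 1 (m + 1) (Or.inl (by omega))
        have hbm : 1 - β ^ m ≠ 0 := by
          have := hβk1 m hm; intro h; nlinarith
        have h6 : Tendsto (fun N => α * (1 - β ^ m) * S m N + Q 1 (m + 1))
            atTop (nhds (α * (1 - β ^ m) * (1 / (1 - β ^ m)) + 0)) := by
          exact (ihm.const_mul _).add (by rw [hq0]; exact tendsto_const_nhds)
        have h7 : α * (1 - β ^ m) * (1 / (1 - β ^ m)) + 0 = α := by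
          field_simp
          ring
        rw [h7] at h6
        exact h6
end

section
/- With P as in the cascade recurrence (β ∈ (0,1)) and any fixed k ≥ 1, P(n,k) → 0 as n → ∞. -/
open Filter

/-- For fixed `k ≥ 1`, `P(n,k) → 0` as `n → ∞`. -/
theorem cascade_P_tendsto_zero
    (β : ℝ) (hβ0 : 0 < β) (hβ1 : β < 1)
    (P : ℕ → ℕ → ℝ)
    (hP1 : P 1 1 = 1)
    (hP0 : ∀ n k : ℕ, (n < k ∨ k = 0) → P n k = 0)
    (hPrec : ∀ n k : ℕ, 2 ≤ n → 1 ≤ k → k ≤ n →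
      P n k = β ^ k * P (n - 1) k + (1 - β ^ (k - 1)) * P (n - 1) (k - 1)) :
    ∀ k : ℕ, 1 ≤ k → Tendsto (fun n : ℕ => P n k) atTop (nhds 0) := by
  -- nonnegativity
  have hnn : ∀ n k : ℕ, 0 ≤ P n k := by
    intro n
    induction n with
    | zero =>
      intro k
      rcases Nat.eq_zero_or_pos k with hk | hk
      · rw [hP0 0 k (Or.inr hk)]
      · rw [hP0 0 k (Or.inl hk)]
    | succ n ih =>
      intro k
      rcases Nat.eq_zero_or_pos k with hk | hk
      · rw [hP0 _ k (Or.inr hk)]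
      by_cases hkn : n + 1 < k
      · rw [hP0 _ k (Or.inl hkn)]
      push_neg at hkn
      rcases Nat.lt_or_ge (n + 1) 2 with hn | hn
      · have hn0 : n = 0 := by omega
        have hk1 : k = 1 := by omega
        subst hn0; subst hk1
        rw [hP1]; norm_num
      · rw [hPrec (n + 1) k hn hk hkn]
        have h1 : (0:ℝ) ≤ β ^ k * P (n + 1 - 1) k :=
          mul_nonneg (pow_nonneg hβ0.le k) (by simpa using ih k)
        have h2 : (0:ℝ) ≤ (1 - β ^ (k - 1)) * P (n + 1 - 1) (k - 1) := by
          apply mul_nonneg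
          · have := pow_le_one₀ hβ0.le hβ1.le (n := k - 1)
            linarith
          · simpa using ih (k - 1)
        linarith
  -- closed form for k = 1
  have h1 : ∀ n : ℕ, 1 ≤ n → P n 1 = β ^ (n - 1) := by
    intro n
    induction n with
    | zero => omega
    | succ n ih =>
      intro _
      rcases Nat.eq_zero_or_pos n with hn | hn
      · subst hn; simpa using hP1
      · rw [hPrec (n + 1) 1 (by omega) le_rfl (by omega)]
        simp only [Nat.add_sub_cancel, Nat.sub_self]
        rw [ih hn, hP0 n 0 (Or.inr rfl)]
        have hn1 : n - 1 + 1 = n := by omega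
        rw [pow_one]
        ring_nf
        rw [← pow_succ', hn1]
  -- summability for k = 1
  have hs1 : Summable (fun n : ℕ => P n 1) := by
    refine Summable.of_nonneg_of_le (fun n => hnn n 1) (fun n => ?_)
      ((summable_geometric_of_lt_one hβ0.le hβ1).mul_left β⁻¹)
    · 
      rcases Nat.eq_zero_or_pos n with hn | hn
      · subst hn
        rw [hP0 0 1 (Or.inl one_pos)]
        positivity
      · rw [h1 n hn]
        rw [inv_mul_eq_div, le_div_iff₀ hβ0, ← pow_succ]
        have : n - 1 + 1 = n := by omega
        rw [this]
  -- summability for all k ≥ 1, by induction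
  have hsum : ∀ k : ℕ, 1 ≤ k → Summable (fun n : ℕ => P n k) := by
    intro k hk
    induction k, hk using Nat.le_induction with
    | base => exact hs1
    | succ k hk ih =>
      set T : ℝ := ∑' n, P n k with hT
      have hT0 : 0 ≤ T := tsum_nonneg (fun n => hnn n k)
      have hc : (0:ℝ) ≤ 1 - β ^ k := by
        have := pow_le_one₀ hβ0.le hβ1.le (n := k); linarith
      have hd : (0:ℝ) < 1 - β ^ (k + 1) := by
        have := pow_lt_one₀ hβ0.le hβ1 (n := k + 1) (by omega); linarith
      -- termwise inequality
      have hterm : ∀ i : ℕ,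
          P i (k + 1) ≤ β ^ (k + 1) * P (i - 1) (k + 1) + (1 - β ^ k) * P (i - 1) k := by
        intro i
        by_cases hik : i < k + 1
        · rw [hP0 i (k + 1) (Or.inl hik)]
          have := mul_nonneg (pow_nonneg hβ0.le (k + 1)) (hnn (i - 1) (k + 1))
          have := mul_nonneg hc (hnn (i - 1) k)
          linarith
        · push_neg at hik
          have hi2 : 2 ≤ i := by omega
          have := hPrec i (k + 1) hi2 (by omega) hik
          simp only [Nat.add_sub_cancel] at this
          rw [this]
      -- partial sum bound
      have hS : ∀ N : ℕ, ∑ i ∈ Finset.range N, P i (k + 1)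
          ≤ (1 - β ^ k) * T / (1 - β ^ (k + 1)) := by
        intro N
        set S : ℝ := ∑ i ∈ Finset.range N, P i (k + 1) with hSdef
        have key : S ≤ β ^ (k + 1) * S + (1 - β ^ k) * T := by
          have h1' : S ≤ ∑ i ∈ Finset.range N,
              (β ^ (k + 1) * P (i - 1) (k + 1) + (1 - β ^ k) * P (i - 1) k) :=
            Finset.sum_le_sum (fun i _ => hterm i)
          rw [Finset.sum_add_distrib, ← Finset.mul_sum, ← Finset.mul_sum] at h1'
          have hshift1 : ∑ i ∈ Finset.range N, P (i - 1) (k + 1) ≤ S := by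
            rcases Nat.eq_zero_or_pos N with hN | hN
            · subst hN; simp [hSdef]
            · obtain ⟨M, rfl⟩ : ∃ M, N = M + 1 := ⟨N - 1, (by omega)⟩
              rw [Finset.sum_range_succ']
              simp only [Nat.add_sub_cancel, Nat.zero_sub]
              rw [hP0 0 (k + 1) (Or.inl (by omega))]
              rw [hSdef, Finset.sum_range_succ]
              have := hnn (M) (k + 1)
              linarith
          have hshift2 : ∑ i ∈ Finset.range N, P (i - 1) k ≤ T := by
            rcases Nat.eq_zero_or_pos N with hN | hN
            · subst hN; simpa using hT0
            · obtain ⟨M, rfl⟩ : ∃ M, N = M + 1 := ⟨N - 1, (by omega)⟩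
              rw [Finset.sum_range_succ']
              simp only [Nat.add_sub_cancel, Nat.zero_sub]
              rw [hP0 0 k (Or.inl (by omega))]
              have hle : ∑ i ∈ Finset.range M, P i k ≤ T :=
                Summable.sum_le_tsum (Finset.range M) (fun i _ => hnn i k) ih
              linarith
          nlinarith [hshift1, hshift2, pow_nonneg hβ0.le (k + 1)]
        rw [le_div_iff₀ hd]
        nlinarith [pow_nonneg hβ0.le (k + 1)]
      exact summable_of_sum_range_le (fun n => hnn n (k + 1)) hS
  intro k hk
  exact (hsum k hk).tendsto_atTop_zero
end
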